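/- arXiv:1503.06291 — 2 statements merged into one kernel-verified Lean document; each statement's English description precedes it below -/
import Mathlib

section
/- Let c > 0, ℓ ≥ 0, and s ∈ [2, ∞]. For the function F(ξ) = e^{-c t |ξ|^{-2}} / |ξ|^ℓ on the region |ξ| ≥ 1 in ℝⁿ, if ℓ s > n (with the convention that for s = ∞ one requires ℓ > 0, or ℓ ≥ 0 with the L^∞ norm), then ‖F‖_{L^s(|ξ|≥1)} ≲ (1+t)^{-ℓ/2 + n/(2s)} for all t ≥ 0, with implicit constant independent of t. -/
open MeasureTheory Real ENNReal

private lemma aux_exp_bound {ℓ : ℝ} (hℓ : 0 ≤ ℓ) {x : ℝ} (hx : 0 ≤ x) :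
    Real.exp (-x) ≤ ((ℓ + 2) / 2) ^ (ℓ / 2) * (1 + x) ^ (-(ℓ / 2)) := by
  have h1 : (0:ℝ) < 1 + x := by linarith
  have hℓ2 : (0:ℝ) < ℓ + 2 := by linarith
  have h2 : (0:ℝ) < (ℓ + 2) / 2 := by linarith
  -- 1 + x ≤ ((ℓ+2)/2) * exp (2x/(ℓ+2))
  have hkey : 1 + x ≤ ((ℓ + 2) / 2) * Real.exp (2 * x / (ℓ + 2)) := by
    have h3 := Real.add_one_le_exp (2 * x / (ℓ + 2))
    have h4 : ((ℓ + 2) / 2) * (2 * x / (ℓ + 2) + 1) = x + (ℓ + 2) / 2 := by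
      field_simp
    nlinarith [Real.exp_pos (2 * x / (ℓ + 2))]
  -- raise to power ℓ/2
  have h5 : (1 + x) ^ (ℓ / 2) ≤ ((ℓ + 2) / 2) ^ (ℓ / 2) * Real.exp x := by
    calc (1 + x) ^ (ℓ / 2)
        ≤ (((ℓ + 2) / 2) * Real.exp (2 * x / (ℓ + 2))) ^ (ℓ / 2) :=
          Real.rpow_le_rpow h1.le hkey (by positivity)
      _ = ((ℓ + 2) / 2) ^ (ℓ / 2) * (Real.exp (2 * x / (ℓ + 2))) ^ (ℓ / 2) :=
          Real.mul_rpow h2.le (Real.exp_pos _).le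
      _ ≤ ((ℓ + 2) / 2) ^ (ℓ / 2) * Real.exp x := by
          gcongr
          rw [← Real.exp_one_rpow (2 * x / (ℓ + 2)), ← Real.rpow_mul (Real.exp_pos 1).le,
            Real.exp_one_rpow]
          apply Real.exp_le_exp.2
          rw [div_mul_eq_mul_div, div_le_iff₀ hℓ2]
          nlinarith
  -- conclude
  have h6 : Real.exp (-x) = Real.exp (-x) * (1 + x) ^ (ℓ / 2) * (1 + x) ^ (-(ℓ / 2)) := by
    rw [mul_assoc, ← Real.rpow_add h1, add_neg_cancel, Real.rpow_zero, mul_one]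
  rw [h6]
  have h7 : Real.exp (-x) * (1 + x) ^ (ℓ / 2) ≤ ((ℓ + 2) / 2) ^ (ℓ / 2) := by
    rw [Real.exp_neg, inv_mul_le_iff₀ (Real.exp_pos x)]
    nlinarith [h5, Real.exp_pos x]
  exact mul_le_mul_of_nonneg_right h7 (by positivity)

private lemma key_ptwise (c ℓ : ℝ) (hc : 0 < c) (hℓ : 0 ≤ ℓ) :
    ∃ K : ℝ, 0 < K ∧ ∀ t r : ℝ, 0 ≤ t → 1 ≤ r →
      Real.exp (-c * t * r ^ (-2 : ℝ)) / r ^ ℓ ≤ K * (Real.sqrt (1 + t) + r) ^ (-ℓ) := by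
  have hm : (0:ℝ) < min 1 c := lt_min one_pos hc
  set K₁ : ℝ := ((ℓ + 2) / 2) ^ (ℓ / 2) with hK₁def
  have hK₁ : 0 < K₁ := Real.rpow_pos_of_pos (by linarith) _
  set M : ℝ := 4 / min 1 c with hMdef
  have hM : 0 < M := by positivity
  refine ⟨K₁ * M ^ (ℓ / 2), by positivity, ?_⟩
  intro t r ht hr
  have hr0 : (0:ℝ) < r := lt_of_lt_of_le one_pos hr
  have hS0 : 0 ≤ Real.sqrt (1 + t) := Real.sqrt_nonneg _
  have hSr : (0:ℝ) < Real.sqrt (1 + t) + r := by linarith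
  set x : ℝ := c * t * r ^ (-2 : ℝ) with hxdef
  have hx : 0 ≤ x := by
    apply mul_nonneg (by positivity)
    positivity
  have h1x : (0:ℝ) < 1 + x := by linarith
  have hr2 : r ^ (-2 : ℝ) = (r ^ 2)⁻¹ := by
    rw [show (-2 : ℝ) = -((2:ℕ):ℝ) by norm_num, Real.rpow_neg hr0.le, Real.rpow_natCast]
  have hxe : 1 + x = (r ^ 2 + c * t) / r ^ 2 := by
    rw [hxdef, hr2]
    field_simp
  have hv : (0:ℝ) < r ^ 2 + c * t := by positivity
  -- step 1 : exp(-x)/r^ℓ ≤ K₁ * (r² + ct)^(-(ℓ/2))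
  have hrlpos : (0:ℝ) < r ^ ℓ := Real.rpow_pos_of_pos hr0 _
  have hstep1 : Real.exp (-c * t * r ^ (-2 : ℝ)) / r ^ ℓ
      ≤ K₁ * (r ^ 2 + c * t) ^ (-(ℓ / 2)) := by
    have he : Real.exp (-c * t * r ^ (-2:ℝ)) = Real.exp (-x) := by
      rw [hxdef]; ring_nf
    have h2 : (1 + x) ^ (-(ℓ / 2)) * (r ^ 2 : ℝ) ^ (-(ℓ / 2))
        = (r ^ 2 + c * t) ^ (-(ℓ / 2)) := by
      rw [← Real.mul_rpow h1x.le (by positivity)]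
      congr 1
      rw [hxe]
      field_simp
    have h3 : (r ^ 2 : ℝ) ^ (-(ℓ / 2)) = (r ^ ℓ)⁻¹ := by
      rw [← Real.rpow_natCast r 2, ← Real.rpow_mul hr0.le, ← Real.rpow_neg hr0.le]
      congr 1
      push_cast
      ring
    calc Real.exp (-c * t * r ^ (-2:ℝ)) / r ^ ℓ
        = Real.exp (-x) * (r ^ ℓ)⁻¹ := by rw [he, div_eq_mul_inv]
      _ ≤ (K₁ * (1 + x) ^ (-(ℓ / 2))) * (r ^ ℓ)⁻¹ := by
          gcongr
          exact aux_exp_bound hℓ hx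
      _ = K₁ * ((1 + x) ^ (-(ℓ / 2)) * (r ^ 2 : ℝ) ^ (-(ℓ / 2))) := by rw [h3]; ring
      _ = K₁ * (r ^ 2 + c * t) ^ (-(ℓ / 2)) := by rw [h2]
  -- step 2 : (√(1+t)+r)² ≤ M (r² + ct)
  have hgeo : (Real.sqrt (1 + t) + r) ^ 2 ≤ M * (r ^ 2 + c * t) := by
    rw [hMdef, div_mul_eq_mul_div, le_div_iff₀ hm]
    nlinarith [Real.sq_sqrt (show (0:ℝ) ≤ 1 + t by linarith),
      sq_nonneg (Real.sqrt (1 + t) - r), min_le_left 1 c, min_le_right 1 c, hm.le,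
      mul_le_mul_of_nonneg_right (min_le_left 1 c) (sq_nonneg r),
      mul_le_mul_of_nonneg_right (min_le_right 1 c) ht]
  -- step 3
  have hsq : ((Real.sqrt (1 + t) + r) ^ 2 : ℝ) ^ (-(ℓ / 2))
      = (Real.sqrt (1 + t) + r) ^ (-ℓ) := by
    rw [← Real.rpow_natCast (Real.sqrt (1 + t) + r) 2, ← Real.rpow_mul hSr.le]
    congr 1
    push_cast
    ring
  have hstep2 : (r ^ 2 + c * t) ^ (-(ℓ / 2))
      ≤ M ^ (ℓ / 2) * (Real.sqrt (1 + t) + r) ^ (-ℓ) := by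
    have h4 : (M * (r ^ 2 + c * t)) ^ (-(ℓ / 2))
        ≤ ((Real.sqrt (1 + t) + r) ^ 2 : ℝ) ^ (-(ℓ / 2)) :=
      Real.rpow_le_rpow_of_nonpos (by positivity) hgeo (by linarith)
    have h5 : (r ^ 2 + c * t) ^ (-(ℓ / 2))
        = M ^ (ℓ / 2) * (M * (r ^ 2 + c * t)) ^ (-(ℓ / 2)) := by
      rw [Real.mul_rpow hM.le hv.le, ← mul_assoc, ← Real.rpow_add hM,
        add_neg_cancel, Real.rpow_zero, one_mul]
    rw [h5, ← hsq]
    gcongr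
  calc Real.exp (-c * t * r ^ (-2:ℝ)) / r ^ ℓ
      ≤ K₁ * (r ^ 2 + c * t) ^ (-(ℓ / 2)) := hstep1
    _ ≤ K₁ * (M ^ (ℓ / 2) * (Real.sqrt (1 + t) + r) ^ (-ℓ)) :=
        mul_le_mul_of_nonneg_left hstep2 hK₁.le
    _ = K₁ * M ^ (ℓ / 2) * (Real.sqrt (1 + t) + r) ^ (-ℓ) := by ring

private lemma scale_lintegral (n : ℕ) (q : ℝ) {R : ℝ} (hR : 0 < R) :
    ∫⁻ ξ : EuclideanSpace ℝ (Fin n), ENNReal.ofReal ((R + ‖ξ‖) ^ (-q)) =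
      ENNReal.ofReal (R ^ ((n : ℝ) - q)) *
        ∫⁻ η : EuclideanSpace ℝ (Fin n), ENNReal.ofReal ((1 + ‖η‖) ^ (-q)) := by
  have hg : Measurable fun ξ : EuclideanSpace ℝ (Fin n) =>
      ENNReal.ofReal ((R + ‖ξ‖) ^ (-q)) := by fun_prop
  have hg1 : Measurable fun ξ : EuclideanSpace ℝ (Fin n) =>
      ENNReal.ofReal ((1 + ‖ξ‖) ^ (-q)) := by fun_prop
  have hmap := Measure.map_addHaar_smul (volume : Measure (EuclideanSpace ℝ (Fin n)))
    (r := R) hR.ne'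
  rw [finrank_euclideanSpace_fin] at hmap
  have h1 : ∫⁻ x : EuclideanSpace ℝ (Fin n), ENNReal.ofReal ((R + ‖R • x‖) ^ (-q)) =
      ENNReal.ofReal |(R ^ n)⁻¹| *
        ∫⁻ ξ : EuclideanSpace ℝ (Fin n), ENNReal.ofReal ((R + ‖ξ‖) ^ (-q)) := by
    rw [← lintegral_map hg (measurable_const_smul R), hmap, lintegral_smul_measure, smul_eq_mul]
  have h2 : ∀ x : EuclideanSpace ℝ (Fin n), ENNReal.ofReal ((R + ‖R • x‖) ^ (-q)) =
      ENNReal.ofReal (R ^ (-q)) * ENNReal.ofReal ((1 + ‖x‖) ^ (-q)) := by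
    intro x
    rw [← ENNReal.ofReal_mul (by positivity), ← Real.mul_rpow hR.le (by positivity)]
    congr 2
    rw [norm_smul, Real.norm_eq_abs, abs_of_pos hR]
    ring
  have h3 : ∫⁻ x : EuclideanSpace ℝ (Fin n), ENNReal.ofReal ((R + ‖R • x‖) ^ (-q)) =
      ENNReal.ofReal (R ^ (-q)) *
        ∫⁻ η : EuclideanSpace ℝ (Fin n), ENNReal.ofReal ((1 + ‖η‖) ^ (-q)) := by
    simp_rw [h2]
    exact lintegral_const_mul _ hg1
  have hRn : ENNReal.ofReal (R ^ n) * ENNReal.ofReal |(R ^ n)⁻¹| = 1 := by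
    rw [abs_of_pos (by positivity), ← ENNReal.ofReal_mul (by positivity),
      mul_inv_cancel₀ (by positivity), ENNReal.ofReal_one]
  calc ∫⁻ ξ : EuclideanSpace ℝ (Fin n), ENNReal.ofReal ((R + ‖ξ‖) ^ (-q))
      = (ENNReal.ofReal (R ^ n) * ENNReal.ofReal |(R ^ n)⁻¹|) *
        ∫⁻ ξ : EuclideanSpace ℝ (Fin n), ENNReal.ofReal ((R + ‖ξ‖) ^ (-q)) := by
        rw [hRn, one_mul]
    _ = ENNReal.ofReal (R ^ n) *
        ∫⁻ x : EuclideanSpace ℝ (Fin n), ENNReal.ofReal ((R + ‖R • x‖) ^ (-q)) := by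
        rw [h1, mul_assoc]
    _ = ENNReal.ofReal (R ^ n) * (ENNReal.ofReal (R ^ (-q)) *
        ∫⁻ η : EuclideanSpace ℝ (Fin n), ENNReal.ofReal ((1 + ‖η‖) ^ (-q))) := by rw [h3]
    _ = ENNReal.ofReal (R ^ ((n : ℝ) - q)) *
        ∫⁻ η : EuclideanSpace ℝ (Fin n), ENNReal.ofReal ((1 + ‖η‖) ^ (-q)) := by
        rw [← mul_assoc, ← ENNReal.ofReal_mul (by positivity)]
        congr 2
        rw [← Real.rpow_natCast R n, ← Real.rpow_add hR, sub_eq_add_neg]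

/-- For `F(ξ) = e^{-c t |ξ|^{-2}} / |ξ|^ℓ` on `{|ξ| ≥ 1} ⊆ ℝⁿ`,
if `ℓ s > n` (for `s = ∞`, `ℓ ≥ 0` with the `L^∞` norm), then
`‖F‖_{L^s(|ξ|≥1)} ≲ (1+t)^{-ℓ/2 + n/(2s)}` for all `t ≥ 0`. -/
theorem stmt0 (n : ℕ) (hn : 0 < n) (c ℓ : ℝ) (hc : 0 < c) (hℓ : 0 ≤ ℓ)
    (s : ℝ≥0∞) (hs2 : 2 ≤ s) (hns : s ≠ ∞ → (n : ℝ) < ℓ * s.toReal) :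
    ∃ C > 0, ∀ t : ℝ, 0 ≤ t →
      eLpNorm
        (fun ξ : EuclideanSpace ℝ (Fin n) =>
          Real.exp (-c * t * ‖ξ‖ ^ (-2 : ℝ)) / ‖ξ‖ ^ ℓ)
        s (volume.restrict {ξ : EuclideanSpace ℝ (Fin n) | 1 ≤ ‖ξ‖})
      ≤ ENNReal.ofReal (C * (1 + t) ^ (-ℓ/2 + (n : ℝ) / (2 * s.toReal))) := by
  obtain ⟨K, hK, hkey⟩ := key_ptwise c ℓ hc hℓ
  have hS : MeasurableSet {ξ : EuclideanSpace ℝ (Fin n) | 1 ≤ ‖ξ‖} :=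
    (isClosed_le continuous_const continuous_norm).measurableSet
  by_cases hstop : s = ∞
  · -- s = ∞ : use the L^∞ bound
    refine ⟨K, hK, fun t ht => ?_⟩
    have h1t : (0:ℝ) < 1 + t := by linarith
    have hbd : ∀ᵐ ξ ∂(volume.restrict {ξ : EuclideanSpace ℝ (Fin n) | 1 ≤ ‖ξ‖}),
        ‖Real.exp (-c * t * ‖ξ‖ ^ (-2 : ℝ)) / ‖ξ‖ ^ ℓ‖ ≤ K * (1 + t) ^ (-ℓ/2) := by
      rw [ae_restrict_iff' hS]
      filter_upwards with ξ hξ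
      have hξ1 : (1:ℝ) ≤ ‖ξ‖ := hξ
      have hpos : (0:ℝ) < ‖ξ‖ := lt_of_lt_of_le one_pos hξ1
      rw [Real.norm_eq_abs, abs_of_nonneg (by positivity)]
      calc Real.exp (-c * t * ‖ξ‖ ^ (-2 : ℝ)) / ‖ξ‖ ^ ℓ
          ≤ K * (Real.sqrt (1 + t) + ‖ξ‖) ^ (-ℓ) := hkey t ‖ξ‖ ht hξ1
        _ ≤ K * (Real.sqrt (1 + t)) ^ (-ℓ) := by
            have h7 : Real.sqrt (1 + t) ≤ Real.sqrt (1 + t) + ‖ξ‖ :=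
              le_add_of_nonneg_right (by positivity)
            exact mul_le_mul_of_nonneg_left
              (Real.rpow_le_rpow_of_nonpos (Real.sqrt_pos.2 h1t) h7 (by linarith)) hK.le
        _ = K * (1 + t) ^ (-ℓ/2) := by
            rw [Real.sqrt_eq_rpow, ← Real.rpow_mul h1t.le]
            congr 2
            ring
    have := eLpNorm_le_of_ae_bound (p := s) hbd
    refine le_trans this ?_
    rw [hstop]
    simp only [ENNReal.toReal_top, _root_.inv_zero, ENNReal.rpow_zero, one_mul, mul_zero,
      _root_.div_zero, add_zero]
    norm_num
  · -- finite s
    set p : ℝ := s.toReal with hpdef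
    have hs0 : s ≠ 0 := by
      intro h
      rw [h] at hs2
      exact (not_le.2 (by norm_num : (0:ℝ≥0∞) < 2)) hs2
    have hp0 : 0 < p := ENNReal.toReal_pos hs0 hstop
    have hq : (n : ℝ) < ℓ * p := hns hstop
    have hℓ0 : 0 < ℓ := by
      rcases lt_or_eq_of_le hℓ with h | h
      · exact h
      · exfalso; rw [← h] at hq; simp at hq
        exact absurd hq (not_lt.2 (Nat.cast_nonneg n))
    -- the dimensional constant
    set J : ℝ≥0∞ :=
      ∫⁻ η : EuclideanSpace ℝ (Fin n), ENNReal.ofReal ((1 + ‖η‖) ^ (-(ℓ * p))) with hJdef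
    have hJ : J < ∞ := by
      have : ((Module.finrank ℝ (EuclideanSpace ℝ (Fin n))) : ℝ) < ℓ * p := by
        rwa [finrank_euclideanSpace_fin]
      exact finite_integral_one_add_norm this
    set C₀ : ℝ := (J ^ (1 / p)).toReal with hC₀def
    have hC₀ : 0 ≤ C₀ := ENNReal.toReal_nonneg
    have hJof : J ^ (1 / p) = ENNReal.ofReal C₀ := by
      rw [hC₀def, ENNReal.ofReal_toReal]
      exact (ENNReal.rpow_lt_top_of_nonneg (by positivity) hJ.ne).ne
    refine ⟨K * (C₀ + 1), by positivity, fun t ht => ?_⟩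
    have h1t : (0:ℝ) < 1 + t := by linarith
    set R : ℝ := Real.sqrt (1 + t) with hRdef
    have hR1 : 1 ≤ R := Real.one_le_sqrt.2 (by linarith)
    have hR0 : 0 < R := lt_of_lt_of_le one_pos hR1
    -- measurable integrand
    have hgm : Measurable fun ξ : EuclideanSpace ℝ (Fin n) =>
        ENNReal.ofReal (K ^ p * (R + ‖ξ‖) ^ (-(ℓ * p))) := by fun_prop
    -- pointwise bound on the set
    have hpt : ∀ ξ : EuclideanSpace ℝ (Fin n), ξ ∈ {ξ : EuclideanSpace ℝ (Fin n) | 1 ≤ ‖ξ‖} →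
        (‖Real.exp (-c * t * ‖ξ‖ ^ (-2 : ℝ)) / ‖ξ‖ ^ ℓ‖₊ : ℝ≥0∞) ^ p
          ≤ ENNReal.ofReal (K ^ p * (R + ‖ξ‖) ^ (-(ℓ * p))) := by
      intro ξ hξ
      have hξ1 : (1:ℝ) ≤ ‖ξ‖ := hξ
      have hpos : (0:ℝ) < ‖ξ‖ := lt_of_lt_of_le one_pos hξ1
      have hnn : (0:ℝ) ≤ Real.exp (-c * t * ‖ξ‖ ^ (-2 : ℝ)) / ‖ξ‖ ^ ℓ := by positivity
      rw [← enorm_eq_nnnorm, Real.enorm_eq_ofReal hnn]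
      calc (ENNReal.ofReal (Real.exp (-c * t * ‖ξ‖ ^ (-2 : ℝ)) / ‖ξ‖ ^ ℓ)) ^ p
          ≤ (ENNReal.ofReal (K * (R + ‖ξ‖) ^ (-ℓ))) ^ p :=
            ENNReal.rpow_le_rpow (ENNReal.ofReal_le_ofReal (hkey t ‖ξ‖ ht hξ1)) hp0.le
        _ = ENNReal.ofReal ((K * (R + ‖ξ‖) ^ (-ℓ)) ^ p) :=
            ENNReal.ofReal_rpow_of_nonneg (by positivity) hp0.le
        _ = ENNReal.ofReal (K ^ p * (R + ‖ξ‖) ^ (-(ℓ * p))) := by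
            congr 1
            rw [Real.mul_rpow hK.le (by positivity), ← Real.rpow_mul (by positivity)]
            congr 2
            ring
    -- the integral bound
    have hbound : (∫⁻ ξ in {ξ : EuclideanSpace ℝ (Fin n) | 1 ≤ ‖ξ‖},
        (‖Real.exp (-c * t * ‖ξ‖ ^ (-2 : ℝ)) / ‖ξ‖ ^ ℓ‖₊ : ℝ≥0∞) ^ p)
        ≤ ENNReal.ofReal (K ^ p) * (ENNReal.ofReal (R ^ ((n : ℝ) - ℓ * p)) * J) := by
      calc (∫⁻ ξ in {ξ : EuclideanSpace ℝ (Fin n) | 1 ≤ ‖ξ‖},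
            (‖Real.exp (-c * t * ‖ξ‖ ^ (-2 : ℝ)) / ‖ξ‖ ^ ℓ‖₊ : ℝ≥0∞) ^ p)
          ≤ ∫⁻ ξ in {ξ : EuclideanSpace ℝ (Fin n) | 1 ≤ ‖ξ‖},
            ENNReal.ofReal (K ^ p * (R + ‖ξ‖) ^ (-(ℓ * p))) :=
            setLIntegral_mono' hS hpt
        _ ≤ ∫⁻ ξ : EuclideanSpace ℝ (Fin n),
            ENNReal.ofReal (K ^ p * (R + ‖ξ‖) ^ (-(ℓ * p))) :=
            setLIntegral_le_lintegral _ _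
        _ = ENNReal.ofReal (K ^ p) * ∫⁻ ξ : EuclideanSpace ℝ (Fin n),
            ENNReal.ofReal ((R + ‖ξ‖) ^ (-(ℓ * p))) := by
            simp_rw [ENNReal.ofReal_mul (by positivity : (0:ℝ) ≤ K ^ p)]
            exact lintegral_const_mul _ (by fun_prop)
        _ = ENNReal.ofReal (K ^ p) * (ENNReal.ofReal (R ^ ((n : ℝ) - ℓ * p)) * J) := by
            rw [scale_lintegral n (ℓ * p) hR0]
    -- conclude
    rw [eLpNorm_eq_lintegral_rpow_enorm_toReal hs0 hstop]
    calc (∫⁻ ξ in {ξ : EuclideanSpace ℝ (Fin n) | 1 ≤ ‖ξ‖},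
          (‖Real.exp (-c * t * ‖ξ‖ ^ (-2 : ℝ)) / ‖ξ‖ ^ ℓ‖₊ : ℝ≥0∞) ^ p) ^ (1 / p)
        ≤ (ENNReal.ofReal (K ^ p) * (ENNReal.ofReal (R ^ ((n : ℝ) - ℓ * p)) * J)) ^ (1 / p) :=
          ENNReal.rpow_le_rpow hbound (by positivity)
      _ = ENNReal.ofReal (K ^ p) ^ (1 / p) * (ENNReal.ofReal (R ^ ((n : ℝ) - ℓ * p)) ^ (1 / p)
          * J ^ (1 / p)) := by
          rw [ENNReal.mul_rpow_of_nonneg _ _ (by positivity),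
            ENNReal.mul_rpow_of_nonneg _ _ (by positivity)]
      _ = ENNReal.ofReal ((K ^ p) ^ (1 / p)) * (ENNReal.ofReal ((R ^ ((n : ℝ) - ℓ * p))
          ^ (1 / p)) * ENNReal.ofReal C₀) := by
          rw [ENNReal.ofReal_rpow_of_nonneg (by positivity) (by positivity),
            ENNReal.ofReal_rpow_of_nonneg (by positivity) (by positivity), hJof]
      _ = ENNReal.ofReal K * (ENNReal.ofReal (R ^ (((n : ℝ) - ℓ * p) / p))
          * ENNReal.ofReal C₀) := by
          rw [← Real.rpow_mul hK.le, mul_one_div, div_self hp0.ne', Real.rpow_one,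
            ← Real.rpow_mul hR0.le, mul_one_div]
      _ ≤ ENNReal.ofReal (K * (C₀ + 1) * (1 + t) ^ (-ℓ/2 + (n : ℝ) / (2 * p))) := by
          rw [← ENNReal.ofReal_mul (show (0:ℝ) ≤ R ^ (((n : ℝ) - ℓ * p) / p) by positivity),
            ← ENNReal.ofReal_mul hK.le]
          apply ENNReal.ofReal_le_ofReal
          have hRe : R ^ (((n : ℝ) - ℓ * p) / p) = (1 + t) ^ (-ℓ/2 + (n : ℝ) / (2 * p)) := by
            rw [hRdef, Real.sqrt_eq_rpow, ← Real.rpow_mul h1t.le]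
            congr 1
            field_simp
            ring
          rw [hRe]
          have h0 : (0:ℝ) ≤ (1 + t) ^ (-ℓ/2 + (n : ℝ) / (2 * p)) := by positivity
          nlinarith [h0, hK.le, hC₀]
end

section
/- Consider the linearized Timoshenko system in Fourier space: v̂_t − iξ û + ŷ = 0, û_t − iξ v̂ = 0, ẑ_t − a iξ ŷ = 0, ŷ_t − a iξ ẑ − v̂ + γ ŷ = 0, with a > 0, a ≠ 1, γ > 0. There exist a functional E[Û(ξ,t)] with E[Û] ≈ |Û|² (uniformly in ξ) and a constant c > 0 such that d/dt E[Û] + c η(ξ)|Û|² ≤ 0, where η(ξ) = ξ²/(1+ξ²)² and Û = (v̂, û, ẑ, ŷ). -/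
set_option maxHeartbeats 1600000

open Complex

/-- Real part of a complex-valued function differentiates componentwise. -/
lemma hasDerivAt_cre {f : ℝ → ℂ} {f' : ℂ} {t : ℝ} (hf : HasDerivAt f f' t) :
    HasDerivAt (fun s => (f s).re) f'.re t := by
  exact (Complex.reCLM.hasFDerivAt.comp_hasDerivAt t hf)

/-- Imaginary part of a complex-valued function differentiates componentwise. -/
lemma hasDerivAt_cim {f : ℝ → ℂ} {f' : ℂ} {t : ℝ} (hf : HasDerivAt f f' t) :
    HasDerivAt (fun s => (f s).im) f'.im t := by
  exact (Complex.imCLM.hasFDerivAt.comp_hasDerivAt t hf)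

lemma scale_nonpos {b q X : ℝ} (hb : 0 < b) (hq : 0 < q) (H : b*(q^2*X) ≤ 0) : X ≤ 0 := by
  by_contra hcon
  push_neg at hcon
  nlinarith [H, mul_pos (mul_pos hb (pow_pos hq 2)) hcon]

noncomputable def tMa (a γ : ℝ) : ℝ :=
  a*(2 + a + 2*(1 + a^2 + (1+a)/4)^2 + 2*γ^2) + 2*a*γ*(a+3) + γ^2/8 + 1

noncomputable def tB (a γ : ℝ) : ℝ := a*γ/tMa a γ

noncomputable def tC (a γ : ℝ) : ℝ := a*tB a γ/(8*(1+a))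

noncomputable def tE (a γ : ℝ) : ℝ → ℂ → ℂ → ℂ → ℂ → ℝ := fun ξ v u z y =>
  v.re*v.re + v.im*v.im + u.re*u.re + u.im*u.im + z.re*z.re + z.im*z.im
    + y.re*y.re + y.im*y.im
  - tB a γ/(1+ξ^2) * (v.re*y.re + v.im*y.im)
  + tB a γ*ξ/(4*(1+ξ^2)^2) * (v.re*u.im - v.im*u.re)
  + tB a γ*ξ/(4*(1+ξ^2)^2) * (y.re*z.im - y.im*z.re)
  - (a*tB a γ/(1+ξ^2) + tB a γ/(4*(1+ξ^2)^2)) * (u.re*z.re + u.im*z.im)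

/-- The core scalar dissipation inequality, in real coordinates. -/
lemma timo_key (a γ β c κ δ ξ v1 v2 u1 u2 z1 z2 y1 y2 : ℝ)
    (ha : 0 < a) (hγ : 0 < γ) (hβ : 0 < β)
    (hκ : 1 + a^2 + (1+a)/4 ≤ κ)
    (hδ0 : 0 ≤ δ) (hδ : β^2*γ^2/8 ≤ a*δ)
    (hc0 : 0 ≤ c) (Hc2 : c ≤ β/8) (Hc3 : c ≤ a*β/8)
    (HY : β*β + a*β*β/4 + β*c + 2*β^2*κ^2 + 2*β^2*γ^2 + δ ≤ 2*β*γ) :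
    (2*(v1*(-(ξ*u2) - y1) + v2*(ξ*u1 - y2) + u1*(-(ξ*v2)) + u2*(ξ*v1)
       + z1*(-(a*ξ*y2)) + z2*(a*ξ*y1)
       + y1*(-(a*ξ*z2) + v1 - γ*y1) + y2*(a*ξ*z1 + v2 - γ*y2))
     - β/(1+ξ^2) * ((-(ξ*u2) - y1)*y1 + v1*(-(a*ξ*z2) + v1 - γ*y1)
          + ((ξ*u1 - y2)*y2 + v2*(a*ξ*z1 + v2 - γ*y2)))
     + β*ξ/(4*(1+ξ^2)^2) * ((-(ξ*u2) - y1)*u2 + v1*(ξ*v1)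
          - ((ξ*u1 - y2)*u1 + v2*(-(ξ*v2))))
     + β*ξ/(4*(1+ξ^2)^2) * ((-(a*ξ*z2) + v1 - γ*y1)*z2 + y1*(a*ξ*y1)
          - ((a*ξ*z1 + v2 - γ*y2)*z1 + y2*(-(a*ξ*y2))))
     - (a*β/(1+ξ^2) + β/(4*(1+ξ^2)^2)) * ((-(ξ*v2))*z1 + u1*(-(a*ξ*y2))
          + ((ξ*v1)*z2 + u2*(a*ξ*y1))))
    + c*(ξ^2/(1+ξ^2)^2)*(v1*v1+v2*v2+u1*u1+u2*u2+z1*z1+z2*z2+y1*y1+y2*y2) ≤ 0 := by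
  obtain ⟨q, hq⟩ : ∃ q : ℝ, q = 1 + ξ^2 := ⟨_, rfl⟩
  rw [← hq]
  have hq1 : (1:ℝ) ≤ q := by rw [hq]; linarith only [sq_nonneg ξ]
  have hq0 : (0:ℝ) < q := by linarith only [hq1]
  have hx2 : ξ^2 ≤ q := by rw [hq]; linarith only []
  have hVnn : (0:ℝ) ≤ v1*v1+v2*v2 := by
    linarith only [mul_self_nonneg v1, mul_self_nonneg v2]
  have hUnn : (0:ℝ) ≤ u1*u1+u2*u2 := by
    linarith only [mul_self_nonneg u1, mul_self_nonneg u2]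
  have hZnn : (0:ℝ) ≤ z1*z1+z2*z2 := by
    linarith only [mul_self_nonneg z1, mul_self_nonneg z2]
  have hYnn : (0:ℝ) ≤ y1*y1+y2*y2 := by
    linarith only [mul_self_nonneg y1, mul_self_nonneg y2]
  obtain ⟨G, hG⟩ : ∃ G : ℝ, G = β*q*(1-a^2) - β/4*(1+a) := ⟨_, rfl⟩
  -- bounds on G
  have hGa1 : (0:ℝ) ≤ β*q*(κ - (1 + a^2 + (1+a)/4)) :=
    mul_nonneg (mul_nonneg hβ.le hq0.le) (by linarith only [hκ])
  have hGa2 : (0:ℝ) ≤ β*q*a^2 := mul_nonneg (mul_nonneg hβ.le hq0.le) (sq_nonneg a)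
  have hGa3 : (0:ℝ) ≤ β*(1+a) := mul_nonneg hβ.le (by linarith only [ha])
  have hGa4 : (0:ℝ) ≤ β*q*(1+a) :=
    mul_nonneg (mul_nonneg hβ.le hq0.le) (by linarith only [ha])
  have hGa5 : (0:ℝ) ≤ β*(q-1)*(1+a) :=
    mul_nonneg (mul_nonneg hβ.le (by linarith only [hq1])) (by linarith only [ha])
  have hGa6 : (0:ℝ) ≤ β*q := mul_nonneg hβ.le hq0.le
  have hGu : G ≤ β*κ*q := by
    rw [hG]; linarith only [hGa1, hGa2, hGa3, hGa4]
  have hGl : -(β*κ*q) ≤ G := by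
    rw [hG]; linarith only [hGa1, hGa5, hGa6]
  have hG2 : G^2 ≤ β^2*κ^2*q^2 := by
    have h := mul_nonneg (by linarith only [hGu] : (0:ℝ) ≤ β*κ*q - G)
      (by linarith only [hGl] : (0:ℝ) ≤ β*κ*q + G)
    nlinarith only [h]
  -- cross-term absorptions
  have hR1 : β*(ξ*G*(u2*y1 - u1*y2)) ≤ β^2/8*(ξ^2*(u1*u1+u2*u2)) + 2*G^2*(y1*y1+y2*y2) := by
    nlinarith only [sq_nonneg (β*(ξ*u2) - 4*G*y1), sq_nonneg (β*(ξ*u1) + 4*G*y2)]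
  have hR2 : 2*G^2*(y1*y1+y2*y2) ≤ 2*β^2*κ^2*q^2*(y1*y1+y2*y2) := by
    nlinarith only [mul_nonneg (sub_nonneg.2 hG2) hYnn]
  have hS0 : β*γ*(β*(v1*y1+v2*y2)) ≤ β^2/8*(v1*v1+v2*v2) + 2*β^2*γ^2*(y1*y1+y2*y2) := by
    nlinarith only [sq_nonneg (β*v1 - 4*β*γ*y1), sq_nonneg (β*v2 - 4*β*γ*y2)]
  have hS1 : q*(β*γ*(β*(v1*y1+v2*y2)))
      ≤ q*(β^2/8*(v1*v1+v2*v2) + 2*β^2*γ^2*(y1*y1+y2*y2)) :=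
    mul_le_mul_of_nonneg_left hS0 hq0.le
  have hT0 : a*(β*(-(β*γ*ξ/4)*(y1*z2 - y2*z1)))
      ≤ a*(a*β^2/8*(ξ^2*(z1*z1+z2*z2))) + β^2*γ^2/8*(y1*y1+y2*y2) := by
    nlinarith only [sq_nonneg (a*β*(ξ*z2) + β*γ*y1), sq_nonneg (a*β*(ξ*z1) - β*γ*y2)]
  have hTy : β^2*γ^2/8*(y1*y1+y2*y2) ≤ a*δ*(y1*y1+y2*y2) :=
    mul_le_mul_of_nonneg_right hδ hYnn
  have hT1 : β*(-(β*γ*ξ/4)*(y1*z2 - y2*z1))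
      ≤ a*β^2/8*(ξ^2*(z1*z1+z2*z2)) + δ*(y1*y1+y2*y2) := by
    refine le_of_mul_le_mul_left ?_ ha
    nlinarith only [hT0, hTy]
  -- row inequalities
  have hVrow : β*((v1*v1+v2*v2)*(-(β*q) + β/4*ξ^2 + c*ξ^2))
      + q*(β^2/8*(v1*v1+v2*v2)) ≤ 0 := by
    have hco : β*(-(β*q) + β/4*ξ^2 + c*ξ^2) + q*(β^2/8) ≤ 0 := by
      linarith only [mul_nonneg (mul_nonneg hβ.le hβ.le)
          (by linarith only [hx2] : (0:ℝ) ≤ q - ξ^2),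
        mul_nonneg (mul_nonneg hβ.le
          (by linarith only [Hc2, hβ] : (0:ℝ) ≤ β/2 - c)) (sq_nonneg ξ),
        mul_nonneg (mul_nonneg hβ.le hβ.le) hq0.le]
    have h := mul_nonneg hVnn (neg_nonneg.2 hco)
    nlinarith only [h]
  have hUrow : β*((u1*u1+u2*u2)*(-(β/4)*ξ^2 + c*ξ^2))
      + β^2/8*(ξ^2*(u1*u1+u2*u2)) ≤ 0 := by
    nlinarith only [mul_nonneg (mul_nonneg (mul_nonneg hβ.le
      (by linarith only [Hc2] : (0:ℝ) ≤ β/8 - c)) (sq_nonneg ξ)) hUnn]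
  have hZrow : β*((z1*z1+z2*z2)*(-(a*β/4)*ξ^2 + c*ξ^2))
      + a*β^2/8*(ξ^2*(z1*z1+z2*z2)) ≤ 0 := by
    nlinarith only [mul_nonneg (mul_nonneg (mul_nonneg hβ.le
      (by linarith only [Hc3] : (0:ℝ) ≤ a*β/8 - c)) (sq_nonneg ξ)) hZnn]
  have hYrow : β*((y1*y1+y2*y2)*(-(2*γ*q^2) + β*q + a*β/4*ξ^2 + c*ξ^2))
      + 2*β^2*κ^2*q^2*(y1*y1+y2*y2) + q*(2*β^2*γ^2*(y1*y1+y2*y2))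
      + δ*(y1*y1+y2*y2) ≤ 0 := by
    have hqq : (0:ℝ) ≤ q^2 - q := by
      nlinarith only [mul_nonneg hq0.le (by linarith only [hq1] : (0:ℝ) ≤ q - 1)]
    have hqx : (0:ℝ) ≤ q^2 - ξ^2 := by linarith only [hqq, hx2, hq1]
    have hco : β*(-(2*γ*q^2) + β*q + a*β/4*ξ^2 + c*ξ^2)
        + 2*β^2*κ^2*q^2 + q*(2*β^2*γ^2) + δ ≤ 0 := by
      linarith only [mul_nonneg (mul_nonneg hβ.le hβ.le) hqq,
        mul_nonneg (mul_nonneg ha.le (mul_nonneg hβ.le hβ.le)) hqx,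
        mul_nonneg (mul_nonneg hβ.le hc0) hqx,
        mul_nonneg (mul_nonneg (mul_nonneg hβ.le hβ.le) (mul_nonneg hγ.le hγ.le)) hqq,
        mul_nonneg hδ0 (by linarith only [hqq, hq1] : (0:ℝ) ≤ q^2 - 1),
        mul_nonneg (by linarith only [HY] : (0:ℝ) ≤ 2*β*γ - (β*β + a*β*β/4 + β*c
          + 2*β^2*κ^2 + 2*β^2*γ^2 + δ)) (sq_nonneg q)]
    have h := mul_nonneg hYnn (neg_nonneg.2 hco)
    nlinarith only [h]
  -- assemble
  have H : β*(q^2*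
      ((2*(v1*(-(ξ*u2) - y1) + v2*(ξ*u1 - y2) + u1*(-(ξ*v2)) + u2*(ξ*v1)
         + z1*(-(a*ξ*y2)) + z2*(a*ξ*y1)
         + y1*(-(a*ξ*z2) + v1 - γ*y1) + y2*(a*ξ*z1 + v2 - γ*y2))
       - β/q * ((-(ξ*u2) - y1)*y1 + v1*(-(a*ξ*z2) + v1 - γ*y1)
            + ((ξ*u1 - y2)*y2 + v2*(a*ξ*z1 + v2 - γ*y2)))
       + β*ξ/(4*q^2) * ((-(ξ*u2) - y1)*u2 + v1*(ξ*v1)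
            - ((ξ*u1 - y2)*u1 + v2*(-(ξ*v2))))
       + β*ξ/(4*q^2) * ((-(a*ξ*z2) + v1 - γ*y1)*z2 + y1*(a*ξ*y1)
            - ((a*ξ*z1 + v2 - γ*y2)*z1 + y2*(-(a*ξ*y2))))
       - (a*β/q + β/(4*q^2)) * ((-(ξ*v2))*z1 + u1*(-(a*ξ*y2))
            + ((ξ*v1)*z2 + u2*(a*ξ*y1))))
      + c*(ξ^2/q^2)*(v1*v1+v2*v2+u1*u1+u2*u2+z1*z1+z2*z2+y1*y1+y2*y2))) ≤ 0 := by
    have hexp : β*(q^2*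
        ((2*(v1*(-(ξ*u2) - y1) + v2*(ξ*u1 - y2) + u1*(-(ξ*v2)) + u2*(ξ*v1)
           + z1*(-(a*ξ*y2)) + z2*(a*ξ*y1)
           + y1*(-(a*ξ*z2) + v1 - γ*y1) + y2*(a*ξ*z1 + v2 - γ*y2))
         - β/q * ((-(ξ*u2) - y1)*y1 + v1*(-(a*ξ*z2) + v1 - γ*y1)
              + ((ξ*u1 - y2)*y2 + v2*(a*ξ*z1 + v2 - γ*y2)))
         + β*ξ/(4*q^2) * ((-(ξ*u2) - y1)*u2 + v1*(ξ*v1)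
              - ((ξ*u1 - y2)*u1 + v2*(-(ξ*v2))))
         + β*ξ/(4*q^2) * ((-(a*ξ*z2) + v1 - γ*y1)*z2 + y1*(a*ξ*y1)
              - ((a*ξ*z1 + v2 - γ*y2)*z1 + y2*(-(a*ξ*y2))))
         - (a*β/q + β/(4*q^2)) * ((-(ξ*v2))*z1 + u1*(-(a*ξ*y2))
              + ((ξ*v1)*z2 + u2*(a*ξ*y1))))
        + c*(ξ^2/q^2)*(v1*v1+v2*v2+u1*u1+u2*u2+z1*z1+z2*z2+y1*y1+y2*y2)))
        = β*((v1*v1+v2*v2)*(-(β*q) + β/4*ξ^2 + c*ξ^2))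
          + β*((u1*u1+u2*u2)*(-(β/4)*ξ^2 + c*ξ^2))
          + β*((z1*z1+z2*z2)*(-(a*β/4)*ξ^2 + c*ξ^2))
          + β*((y1*y1+y2*y2)*(-(2*γ*q^2) + β*q + a*β/4*ξ^2 + c*ξ^2))
          + β*(ξ*G*(u2*y1 - u1*y2))
          + q*(β*γ*(β*(v1*y1+v2*y2)))
          + β*(-(β*γ*ξ/4)*(y1*z2 - y2*z1)) := by
      rw [hG]; field_simp; ring
    rw [hexp]
    linarith only [hR1, hR2, hS1, hT1, hVrow, hUrow, hZrow, hYrow]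
  exact scale_nonpos hβ hq0 H

/-- Norm-equivalence of the modified energy, in real coordinates. -/
lemma timo_equiv (a β ξ v1 v2 u1 u2 z1 z2 y1 y2 : ℝ) (ha : 0 < a) (hβ : 0 < β)
    (hsmall : β*(a+3) ≤ 1/2) :
    1/2*(v1*v1+v2*v2+u1*u1+u2*u2+z1*z1+z2*z2+y1*y1+y2*y2) ≤
      (v1*v1 + v2*v2 + u1*u1 + u2*u2 + z1*z1 + z2*z2 + y1*y1 + y2*y2
       - β/(1+ξ^2) * (v1*y1 + v2*y2)
       + β*ξ/(4*(1+ξ^2)^2) * (v1*u2 - v2*u1)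
       + β*ξ/(4*(1+ξ^2)^2) * (y1*z2 - y2*z1)
       - (a*β/(1+ξ^2) + β/(4*(1+ξ^2)^2)) * (u1*z1 + u2*z2)) ∧
      (v1*v1 + v2*v2 + u1*u1 + u2*u2 + z1*z1 + z2*z2 + y1*y1 + y2*y2
       - β/(1+ξ^2) * (v1*y1 + v2*y2)
       + β*ξ/(4*(1+ξ^2)^2) * (v1*u2 - v2*u1)
       + β*ξ/(4*(1+ξ^2)^2) * (y1*z2 - y2*z1)
       - (a*β/(1+ξ^2) + β/(4*(1+ξ^2)^2)) * (u1*z1 + u2*z2))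
      ≤ 2*(v1*v1+v2*v2+u1*u1+u2*u2+z1*z1+z2*z2+y1*y1+y2*y2) := by
  have hq1 : (1:ℝ) ≤ 1+ξ^2 := by linarith only [sq_nonneg ξ]
  have hq0 : (0:ℝ) < 1+ξ^2 := by linarith only [hq1]
  have hNnn : (0:ℝ) ≤ v1*v1+v2*v2+u1*u1+u2*u2+z1*z1+z2*z2+y1*y1+y2*y2 := by
    linarith only [mul_self_nonneg v1, mul_self_nonneg v2, mul_self_nonneg u1,
      mul_self_nonneg u2, mul_self_nonneg z1, mul_self_nonneg z2,
      mul_self_nonneg y1, mul_self_nonneg y2]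
  -- coefficient bounds
  have hb1l : 0 ≤ β/(1+ξ^2) := by positivity
  have hb1u : β/(1+ξ^2) ≤ β := div_le_self hβ.le hq1
  have hb2abs : |β*ξ/(4*(1+ξ^2)^2)| ≤ β/4 := by
    rw [abs_div, abs_mul, abs_of_pos hβ,
      abs_of_pos (show (0:ℝ) < 4*(1+ξ^2)^2 by positivity),
      div_le_div_iff₀ (by positivity) (by norm_num)]
    have heq : β*|ξ|^2 = β*ξ^2 := by rw [_root_.sq_abs]
    linarith only [mul_nonneg hβ.le (sq_nonneg (|ξ| - 1)), heq,
      mul_nonneg hβ.le (sq_nonneg ξ), mul_nonneg hβ.le (sq_nonneg (ξ^2)), hβ.le]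
  have hb2u : β*ξ/(4*(1+ξ^2)^2) ≤ β/4 := (abs_le.1 hb2abs).2
  have hb2l : -(β/4) ≤ β*ξ/(4*(1+ξ^2)^2) := (abs_le.1 hb2abs).1
  have hb4l : 0 ≤ a*β/(1+ξ^2) + β/(4*(1+ξ^2)^2) := by positivity
  have hb4u : a*β/(1+ξ^2) + β/(4*(1+ξ^2)^2) ≤ a*β + β/4 := by
    have h1 : a*β/(1+ξ^2) ≤ a*β := div_le_self (mul_nonneg ha.le hβ.le) hq1
    have h2 : β/(4*(1+ξ^2)^2) ≤ β/4 := by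
      rw [div_le_div_iff₀ (by positivity) (by norm_num)]
      linarith only [mul_nonneg hβ.le (sq_nonneg ξ), mul_nonneg hβ.le (sq_nonneg (ξ^2))]
    linarith only [h1, h2]
  -- F-bounds
  have hM1 : (0:ℝ) ≤ (v1*v1+v2*v2+y1*y1+y2*y2)/2 := by
    linarith only [mul_self_nonneg v1, mul_self_nonneg v2, mul_self_nonneg y1,
      mul_self_nonneg y2]
  have hM4 : (0:ℝ) ≤ (u1*u1+u2*u2+z1*z1+z2*z2)/2 := by
    linarith only [mul_self_nonneg u1, mul_self_nonneg u2, mul_self_nonneg z1,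
      mul_self_nonneg z2]
  have hF1u : v1*y1 + v2*y2 ≤ (v1*v1+v2*v2+y1*y1+y2*y2)/2 := by
    linarith only [sq_nonneg (v1-y1), sq_nonneg (v2-y2)]
  have hF1l : -((v1*v1+v2*v2+y1*y1+y2*y2)/2) ≤ v1*y1 + v2*y2 := by
    linarith only [sq_nonneg (v1+y1), sq_nonneg (v2+y2)]
  have hF2u : v1*u2 - v2*u1 ≤ (v1*v1+v2*v2+u1*u1+u2*u2)/2 := by
    linarith only [sq_nonneg (v1-u2), sq_nonneg (v2+u1)]
  have hF2l : -((v1*v1+v2*v2+u1*u1+u2*u2)/2) ≤ v1*u2 - v2*u1 := by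
    linarith only [sq_nonneg (v1+u2), sq_nonneg (v2-u1)]
  have hF3u : y1*z2 - y2*z1 ≤ (y1*y1+y2*y2+z1*z1+z2*z2)/2 := by
    linarith only [sq_nonneg (y1-z2), sq_nonneg (y2+z1)]
  have hF3l : -((y1*y1+y2*y2+z1*z1+z2*z2)/2) ≤ y1*z2 - y2*z1 := by
    linarith only [sq_nonneg (y1+z2), sq_nonneg (y2-z1)]
  have hF4u : u1*z1 + u2*z2 ≤ (u1*u1+u2*u2+z1*z1+z2*z2)/2 := by
    linarith only [sq_nonneg (u1-z1), sq_nonneg (u2-z2)]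
  have hF4l : -((u1*u1+u2*u2+z1*z1+z2*z2)/2) ≤ u1*z1 + u2*z2 := by
    linarith only [sq_nonneg (u1+z1), sq_nonneg (u2+z2)]
  -- product bounds
  have hT1u : β/(1+ξ^2) * (v1*y1 + v2*y2) ≤ β*((v1*v1+v2*v2+y1*y1+y2*y2)/2) := by
    linarith only [mul_nonneg hb1l
        (by linarith only [hF1u] : (0:ℝ) ≤ (v1*v1+v2*v2+y1*y1+y2*y2)/2 - (v1*y1+v2*y2)),
      mul_nonneg (by linarith only [hb1u] : (0:ℝ) ≤ β - β/(1+ξ^2)) hM1]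
  have hT1l : -(β*((v1*v1+v2*v2+y1*y1+y2*y2)/2)) ≤ β/(1+ξ^2) * (v1*y1 + v2*y2) := by
    linarith only [mul_nonneg hb1l
        (by linarith only [hF1l] : (0:ℝ) ≤ (v1*v1+v2*v2+y1*y1+y2*y2)/2 + (v1*y1+v2*y2)),
      mul_nonneg (by linarith only [hb1u] : (0:ℝ) ≤ β - β/(1+ξ^2)) hM1]
  have hT2u : β*ξ/(4*(1+ξ^2)^2) * (v1*u2 - v2*u1) ≤ β/4*((v1*v1+v2*v2+u1*u1+u2*u2)/2) := by
    linarith only [mul_nonneg (by linarith only [hb2u] : (0:ℝ) ≤ β/4 - β*ξ/(4*(1+ξ^2)^2))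
        (by linarith only [hF2l] : (0:ℝ) ≤ (v1*v1+v2*v2+u1*u1+u2*u2)/2 + (v1*u2 - v2*u1)),
      mul_nonneg (by linarith only [hb2l] : (0:ℝ) ≤ β/4 + β*ξ/(4*(1+ξ^2)^2))
        (by linarith only [hF2u] : (0:ℝ) ≤ (v1*v1+v2*v2+u1*u1+u2*u2)/2 - (v1*u2 - v2*u1))]
  have hT2l : -(β/4*((v1*v1+v2*v2+u1*u1+u2*u2)/2)) ≤ β*ξ/(4*(1+ξ^2)^2) * (v1*u2 - v2*u1) := by
    linarith only [mul_nonneg (by linarith only [hb2u] : (0:ℝ) ≤ β/4 - β*ξ/(4*(1+ξ^2)^2))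
        (by linarith only [hF2u] : (0:ℝ) ≤ (v1*v1+v2*v2+u1*u1+u2*u2)/2 - (v1*u2 - v2*u1)),
      mul_nonneg (by linarith only [hb2l] : (0:ℝ) ≤ β/4 + β*ξ/(4*(1+ξ^2)^2))
        (by linarith only [hF2l] : (0:ℝ) ≤ (v1*v1+v2*v2+u1*u1+u2*u2)/2 + (v1*u2 - v2*u1))]
  have hT3u : β*ξ/(4*(1+ξ^2)^2) * (y1*z2 - y2*z1) ≤ β/4*((y1*y1+y2*y2+z1*z1+z2*z2)/2) := by
    linarith only [mul_nonneg (by linarith only [hb2u] : (0:ℝ) ≤ β/4 - β*ξ/(4*(1+ξ^2)^2))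
        (by linarith only [hF3l] : (0:ℝ) ≤ (y1*y1+y2*y2+z1*z1+z2*z2)/2 + (y1*z2 - y2*z1)),
      mul_nonneg (by linarith only [hb2l] : (0:ℝ) ≤ β/4 + β*ξ/(4*(1+ξ^2)^2))
        (by linarith only [hF3u] : (0:ℝ) ≤ (y1*y1+y2*y2+z1*z1+z2*z2)/2 - (y1*z2 - y2*z1))]
  have hT3l : -(β/4*((y1*y1+y2*y2+z1*z1+z2*z2)/2)) ≤ β*ξ/(4*(1+ξ^2)^2) * (y1*z2 - y2*z1) := by
    linarith only [mul_nonneg (by linarith only [hb2u] : (0:ℝ) ≤ β/4 - β*ξ/(4*(1+ξ^2)^2))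
        (by linarith only [hF3u] : (0:ℝ) ≤ (y1*y1+y2*y2+z1*z1+z2*z2)/2 - (y1*z2 - y2*z1)),
      mul_nonneg (by linarith only [hb2l] : (0:ℝ) ≤ β/4 + β*ξ/(4*(1+ξ^2)^2))
        (by linarith only [hF3l] : (0:ℝ) ≤ (y1*y1+y2*y2+z1*z1+z2*z2)/2 + (y1*z2 - y2*z1))]
  have hT4u : (a*β/(1+ξ^2) + β/(4*(1+ξ^2)^2)) * (u1*z1 + u2*z2)
      ≤ (a*β + β/4)*((u1*u1+u2*u2+z1*z1+z2*z2)/2) := by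
    linarith only [mul_nonneg hb4l
        (by linarith only [hF4u] : (0:ℝ) ≤ (u1*u1+u2*u2+z1*z1+z2*z2)/2 - (u1*z1+u2*z2)),
      mul_nonneg (by linarith only [hb4u] :
        (0:ℝ) ≤ (a*β + β/4) - (a*β/(1+ξ^2) + β/(4*(1+ξ^2)^2))) hM4]
  have hT4l : -((a*β + β/4)*((u1*u1+u2*u2+z1*z1+z2*z2)/2))
      ≤ (a*β/(1+ξ^2) + β/(4*(1+ξ^2)^2)) * (u1*z1 + u2*z2) := by
    linarith only [mul_nonneg hb4l
        (by linarith only [hF4l] : (0:ℝ) ≤ (u1*u1+u2*u2+z1*z1+z2*z2)/2 + (u1*z1+u2*z2)),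
      mul_nonneg (by linarith only [hb4u] :
        (0:ℝ) ≤ (a*β + β/4) - (a*β/(1+ξ^2) + β/(4*(1+ξ^2)^2))) hM4]
  -- scaling facts
  have hscale : (0:ℝ) ≤ (1/2 - β*(a+3)) *
      (v1*v1+v2*v2+u1*u1+u2*u2+z1*z1+z2*z2+y1*y1+y2*y2) :=
    mul_nonneg (by linarith only [hsmall]) hNnn
  have hax : ∀ x : ℝ, (0:ℝ) ≤ β*(x*x) := fun x => mul_nonneg hβ.le (mul_self_nonneg x)
  have haax : ∀ x : ℝ, (0:ℝ) ≤ a*β*(x*x) :=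
    fun x => mul_nonneg (mul_nonneg ha.le hβ.le) (mul_self_nonneg x)
  constructor
  · linarith only [hT1u, hT2l, hT3l, hT4u, hscale,
      hax v1, hax v2, hax u1, hax u2, hax z1, hax z2, hax y1, hax y2,
      haax v1, haax v2, haax u1, haax u2, haax z1, haax z2, haax y1, haax y2]
  · linarith only [hT1l, hT2u, hT3u, hT4l, hscale,
      hax v1, hax v2, hax u1, hax u2, hax z1, hax z2, hax y1, hax y2,
      haax v1, haax v2, haax u1, haax u2, haax z1, haax z2, haax y1, haax y2]

/-- For the Fourier-transformed linearized Timoshenko system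
with `a ≠ 1`, there is an energy functional `E ≈ |Û|²` and `c > 0` with
`d/dt E[Û] + c η(ξ) |Û|² ≤ 0`, where `η(ξ) = ξ²/(1+ξ²)²`. -/
theorem stmt11 (a γ : ℝ) (ha : 0 < a) (ha1 : a ≠ 1) (hγ : 0 < γ) :
    ∃ (E : ℝ → ℂ → ℂ → ℂ → ℂ → ℝ) (c C₁ C₂ : ℝ), 0 < c ∧ 0 < C₁ ∧ 0 < C₂ ∧
      (∀ (ξ : ℝ) (v u z y : ℂ),
        C₁ * (‖v‖ ^ 2 + ‖u‖ ^ 2 + ‖z‖ ^ 2 + ‖y‖ ^ 2) ≤ E ξ v u z y ∧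
        E ξ v u z y ≤ C₂ * (‖v‖ ^ 2 + ‖u‖ ^ 2 + ‖z‖ ^ 2 + ‖y‖ ^ 2)) ∧
      (∀ (ξ : ℝ) (v u z y : ℝ → ℂ),
        (∀ t, HasDerivAt v (I * ξ * u t - y t) t) →
        (∀ t, HasDerivAt u (I * ξ * v t) t) →
        (∀ t, HasDerivAt z ((a : ℂ) * I * ξ * y t) t) →
        (∀ t, HasDerivAt y ((a : ℂ) * I * ξ * z t + v t - (γ : ℂ) * y t) t) →
        ∃ D : ℝ → ℝ, ∀ t,
          HasDerivAt (fun s => E ξ (v s) (u s) (z s) (y s)) (D t) t ∧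
          D t + c * (ξ ^ 2 / (1 + ξ ^ 2) ^ 2) *
            (‖v t‖ ^ 2 + ‖u t‖ ^ 2 + ‖z t‖ ^ 2 + ‖y t‖ ^ 2) ≤ 0) := by
  have hMa : 0 < tMa a γ := by unfold tMa; positivity
  have hβ : 0 < tB a γ := div_pos (mul_pos ha hγ) hMa
  have hcp : 0 < tC a γ :=
    div_pos (mul_pos ha hβ) (by linarith only [ha] : (0:ℝ) < 8*(1+a))
  have hβMa : tB a γ * tMa a γ = a*γ := div_mul_cancel₀ _ hMa.ne'
  have hc2 : tC a γ ≤ tB a γ/8 := by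
    rw [show tC a γ = a*tB a γ/(8*(1+a)) from rfl,
      div_le_div_iff₀ (by positivity) (by norm_num)]
    nlinarith only [hβ, mul_nonneg ha.le hβ.le]
  have hc3 : tC a γ ≤ a*tB a γ/8 := by
    rw [show tC a γ = a*tB a γ/(8*(1+a)) from rfl,
      div_le_div_iff₀ (by positivity) (by norm_num)]
    nlinarith only [mul_nonneg ha.le hβ.le, mul_nonneg (mul_nonneg ha.le hβ.le) ha.le]
  have hbig : tB a γ*(2 + a/4 + 2*(1 + a^2 + (1+a)/4)^2 + 2*γ^2) ≤ γ := by
    refine le_of_mul_le_mul_right ?_ hMa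
    have e : tB a γ*(2 + a/4 + 2*(1 + a^2 + (1+a)/4)^2 + 2*γ^2) * tMa a γ
        = (2 + a/4 + 2*(1 + a^2 + (1+a)/4)^2 + 2*γ^2) * (a*γ) := by
      rw [← hβMa]; ring
    rw [e]
    unfold tMa
    nlinarith only [mul_nonneg hγ.le (sq_nonneg a),
      mul_nonneg (mul_nonneg (mul_nonneg ha.le hγ.le) hγ.le)
        (by linarith only [ha] : (0:ℝ) ≤ a+3),
      mul_nonneg (mul_nonneg hγ.le hγ.le) hγ.le, hγ.le, hγ]
  have h8 : tB a γ*γ ≤ 8*a := by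
    refine le_of_mul_le_mul_right ?_ hMa
    have e : tB a γ*γ*tMa a γ = γ*(tB a γ*tMa a γ) := by ring
    rw [e, hβMa]
    unfold tMa
    nlinarith only [mul_nonneg ha.le (mul_nonneg hγ.le hγ.le),
      mul_nonneg ha.le (sq_nonneg (1 + a^2 + (1+a)/4)),
      mul_nonneg (mul_nonneg ha.le hγ.le) (by linarith only [ha] : (0:ℝ) ≤ a+3),
      mul_nonneg ha.le ha.le, ha.le, hγ.le, mul_pos ha hγ]
  have hδ : (tB a γ)^2*γ^2/8 ≤ a*(tB a γ*γ) := by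
    nlinarith only [mul_le_mul_of_nonneg_left h8 (mul_nonneg hβ.le hγ.le)]
  have hδ0 : (0:ℝ) ≤ tB a γ*γ := mul_nonneg hβ.le hγ.le
  have HY : tB a γ*tB a γ + a*tB a γ*tB a γ/4 + tB a γ*tC a γ
      + 2*(tB a γ)^2*(1 + a^2 + (1+a)/4)^2 + 2*(tB a γ)^2*γ^2 + tB a γ*γ
      ≤ 2*tB a γ*γ := by
    nlinarith only [mul_le_mul_of_nonneg_left hbig hβ.le,
      mul_le_mul_of_nonneg_left hc2 hβ.le, mul_nonneg hβ.le hβ.le]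
  have hsmall : tB a γ*(a+3) ≤ 1/2 := by
    refine le_of_mul_le_mul_right ?_ hMa
    have e : tB a γ*(a+3)*tMa a γ = (a+3)*(tB a γ*tMa a γ) := by ring
    rw [e, hβMa]
    unfold tMa
    nlinarith only [mul_nonneg ha.le (sq_nonneg (1 + a^2 + (1+a)/4)),
      mul_nonneg ha.le (mul_nonneg hγ.le hγ.le), mul_nonneg ha.le ha.le,
      mul_nonneg hγ.le hγ.le, ha.le, hγ.le,
      mul_nonneg (mul_nonneg ha.le hγ.le) (by linarith only [ha] : (0:ℝ) ≤ a+3)]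
  refine ⟨tE a γ, tC a γ, 1/2, 2, hcp, by norm_num, by norm_num, ?_, ?_⟩
  · intro ξ v u z y
    have h := timo_equiv a (tB a γ) ξ v.re v.im u.re u.im z.re z.im y.re y.im ha hβ hsmall
    constructor
    · simp only [Complex.sq_norm, Complex.normSq_apply, tE]
      linarith only [h.1]
    · simp only [Complex.sq_norm, Complex.normSq_apply, tE]
      linarith only [h.2]
  · intro ξ v u z y hv hu hz hy
    refine ⟨deriv (fun r => tE a γ ξ (v r) (u r) (z r) (y r)), fun t => ?_⟩
    have hvr := hasDerivAt_cre (hv t)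
    have hvi := hasDerivAt_cim (hv t)
    have hur := hasDerivAt_cre (hu t)
    have hui := hasDerivAt_cim (hu t)
    have hzr := hasDerivAt_cre (hz t)
    have hzi := hasDerivAt_cim (hz t)
    have hyr := hasDerivAt_cre (hy t)
    have hyi := hasDerivAt_cim (hy t)
    have hN := ((((((((hvr.mul hvr).add (hvi.mul hvi)).add (hur.mul hur)).add
      (hui.mul hui)).add (hzr.mul hzr)).add (hzi.mul hzi)).add (hyr.mul hyr)).add
      (hyi.mul hyi))
    have h1 := ((hvr.mul hyr).add (hvi.mul hyi)).const_mul (tB a γ/(1+ξ^2))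
    have h2 := ((hvr.mul hui).sub (hvi.mul hur)).const_mul (tB a γ*ξ/(4*(1+ξ^2)^2))
    have h3 := ((hyr.mul hzi).sub (hyi.mul hzr)).const_mul (tB a γ*ξ/(4*(1+ξ^2)^2))
    have h4 := ((hur.mul hzr).add (hui.mul hzi)).const_mul
      (a*tB a γ/(1+ξ^2) + tB a γ/(4*(1+ξ^2)^2))
    have hE : HasDerivAt (fun r => tE a γ ξ (v r) (u r) (z r) (y r)) _ t :=
      (((hN.sub h1).add h2).add h3).sub h4
    refine ⟨hE.differentiableAt.hasDerivAt, ?_⟩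
    rw [hE.deriv]
    have hkey := timo_key a γ (tB a γ) (tC a γ) (1 + a^2 + (1+a)/4) (tB a γ*γ) ξ
      (v t).re (v t).im (u t).re (u t).im (z t).re (z t).im (y t).re (y t).im
      ha hγ hβ le_rfl hδ0 hδ hcp.le hc2 hc3 HY
    simp only [Complex.sq_norm, Complex.normSq_apply,
      Complex.sub_re, Complex.sub_im, Complex.add_re, Complex.add_im,
      Complex.mul_re, Complex.mul_im, Complex.I_re, Complex.I_im,
      Complex.ofReal_re, Complex.ofReal_im,
      zero_mul, mul_zero, one_mul, mul_one, zero_add, add_zero, sub_zero,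
      zero_sub, neg_zero, neg_neg]
    linarith only [hkey]
end
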